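/- The lattice A4 ⊕ A3 ⊕ A2 cannot be embedded in the lattice H ⊕ E8; that is, there is no 10 × 9 integer matrix M such that Mᵀ · G(H ⊕ E8) · M equals the Gram matrix of A4 ⊕ A3 ⊕ A2. -/

import Mathlib

open Matrix

/-- Gram matrix of the ambient lattice (10 × 10). -/
def ambientGram : Matrix (Fin 10) (Fin 10) ℤ :=
  !![0, 1, 0, 0, 0, 0, 0, 0, 0, 0;
      1, 0, 0, 0, 0, 0, 0, 0, 0, 0;
      0, 0, -2, 1, 0, 0, 0, 0, 0, 0;
      0, 0, 1, -2, 1, 0, 0, 0, 0, 0;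
      0, 0, 0, 1, -2, 1, 0, 0, 0, 1;
      0, 0, 0, 0, 1, -2, 1, 0, 0, 0;
      0, 0, 0, 0, 0, 1, -2, 1, 0, 0;
      0, 0, 0, 0, 0, 0, 1, -2, 1, 0;
      0, 0, 0, 0, 0, 0, 0, 1, -2, 0;
      0, 0, 0, 0, 1, 0, 0, 0, 0, -2]

/-- Gram matrix of the root lattice to be embedded (9 × 9). -/
def rootGram : Matrix (Fin 9) (Fin 9) ℤ :=
  !![-2, 1, 0, 0, 0, 0, 0, 0, 0;
      1, -2, 1, 0, 0, 0, 0, 0, 0;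
      0, 1, -2, 1, 0, 0, 0, 0, 0;
      0, 0, 1, -2, 0, 0, 0, 0, 0;
      0, 0, 0, 0, -2, 1, 0, 0, 0;
      0, 0, 0, 0, 1, -2, 1, 0, 0;
      0, 0, 0, 0, 0, 1, -2, 0, 0;
      0, 0, 0, 0, 0, 0, 0, -2, 1;
      0, 0, 0, 0, 0, 0, 0, 1, -2]

def Cmat : Matrix (Fin 9) (Fin 9) ℤ :=
  !![-48, -36, -24, -12, 0, 0, 0, 0, 0;
     -36, -72, -48, -24, 0, 0, 0, 0, 0;
     -24, -48, -72, -36, 0, 0, 0, 0, 0;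
     -12, -24, -36, -48, 0, 0, 0, 0, 0;
     0, 0, 0, 0, -45, -30, -15, 0, 0;
     0, 0, 0, 0, -30, -60, -30, 0, 0;
     0, 0, 0, 0, -15, -30, -45, 0, 0;
     0, 0, 0, 0, 0, 0, 0, -40, -20;
     0, 0, 0, 0, 0, 0, 0, -20, -40]

def Emat : Matrix (Fin 9) (Fin 9) ℤ :=
  !![-8, -15, -22, -29, -9, -18, -27, -12, -24;
     -3, -6, -8, -10, -3, -6, -9, -4, -8;
     -10, -20, -30, -39, -12, -24, -36, -16, -32;
     -5, -10, -15, -20, -6, -12, -18, -8, -16;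
     -9, -18, -27, -36, -12, -23, -34, -15, -30;
     -6, -12, -18, -24, -8, -16, -23, -10, -20;
     -3, -6, -9, -12, -4, -8, -12, -5, -10;
     -8, -16, -24, -32, -10, -20, -30, -14, -27;
     -4, -8, -12, -16, -5, -10, -15, -7, -14]

def Ginv : Matrix (Fin 10) (Fin 10) ℤ :=
  !![0, 1, 0, 0, 0, 0, 0, 0, 0, 0;
     1, 0, 0, 0, 0, 0, 0, 0, 0, 0;
     0, 0, -4, -7, -10, -8, -6, -4, -2, -5;
     0, 0, -7, -14, -20, -16, -12, -8, -4, -10;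
     0, 0, -10, -20, -30, -24, -18, -12, -6, -15;
     0, 0, -8, -16, -24, -20, -15, -10, -5, -12;
     0, 0, -6, -12, -18, -15, -12, -8, -4, -9;
     0, 0, -4, -8, -12, -10, -8, -6, -3, -6;
     0, 0, -2, -4, -6, -5, -4, -3, -2, -3;
     0, 0, -5, -10, -15, -12, -9, -6, -3, -8]

def a0 : Fin 9 → ℤ := ![36, 12, 48, 24, 45, 30, 15, 40, 20]

def wv : Fin 9 → ℤ := ![12, 24, 36, 48, 15, 30, 45, 20, 40]

def g0 : Fin 9 → ℤ := ![0, 0, 0, -1, 0, 0, -1, 0, -1]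

def gam0 : Fin 9 → ℤ := ![-1, 1, -1, 0, -1, 0, 0, -1, 0]def B2 : Matrix (Fin 9) (Fin 9) ℤ :=
  !![0, 1, 0, 1, 0, 0, 0, 0, 0;
     1, 0, 0, 0, 0, 0, 0, 0, 0;
     0, 0, 0, 1, 0, 0, 0, 0, 0;
     1, 0, 1, 0, 0, 0, 0, 0, 0;
     0, 0, 0, 0, 0, 0, 0, 0, 0;
     0, 0, 0, 0, 1, 0, 0, 0, 0;
     0, 0, 0, 0, 0, 1, 0, 0, 0;
     0, 0, 0, 0, 0, 0, 0, 0, 1;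
     0, 0, 0, 0, 0, 0, 0, 1, 0]

def E2 : Matrix (Fin 9) (Fin 9) ℤ :=
  !![0, -1, 1, -1, 0, 0, 0, 0, 0;
     -1, 0, 0, 0, 0, 0, 0, 0, 0;
     0, 0, 0, -1, 0, 0, 0, 0, 0;
     -1, 1, -1, 0, 0, 0, 0, 0, 0;
     0, 0, 0, 0, 0, 0, 0, 0, 0;
     0, 0, 0, 0, -1, 0, 0, 0, 0;
     0, 0, 0, 0, 1, -1, 0, 0, 0;
     0, 0, 0, 0, 0, 0, 0, 0, -1;
     0, 0, 0, 0, 0, 0, 0, -1, 0]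

def a2 : Fin 9 → ℤ := ![0, 0, 0, 0, 1, 0, 1, 0, 0]

def s2 : Fin 9 → ℤ := ![0, 0, 0, 0, 1, 0, 0, 0, 0]

def gam2 : Fin 9 → ℤ := ![0, 0, 0, 0, -1, 1, -1, 0, 0]

def B3 : Matrix (Fin 9) (Fin 9) ℤ :=
  !![1, 0, 2, 1, 0, 0, 0, 0, 0;
     0, 0, 1, 2, 0, 0, 0, 0, 0;
     2, 1, 0, 0, 0, 0, 0, 0, 0;
     1, 2, 0, 1, 0, 0, 0, 0, 0;
     0, 0, 0, 0, 0, 1, 2, 0, 0;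
     0, 0, 0, 0, 1, 2, 1, 0, 0;
     0, 0, 0, 0, 2, 1, 0, 0, 0;
     0, 0, 0, 0, 0, 0, 0, 0, 0;
     0, 0, 0, 0, 0, 0, 0, 1, 0]

def E3 : Matrix (Fin 9) (Fin 9) ℤ :=
  !![-1, 1, -1, 0, 0, 0, 0, 0, 0;
     0, 0, 0, -1, 0, 0, 0, 0, 0;
     -1, 0, 0, 0, 0, 0, 0, 0, 0;
     0, -1, 1, -1, 0, 0, 0, 0, 0;
     0, 0, 0, 0, 0, 0, -1, 0, 0;
     0, 0, 0, 0, 0, -1, 0, 0, 0;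
     0, 0, 0, 0, -1, 0, 0, 0, 0;
     0, 0, 0, 0, 0, 0, 0, 0, 0;
     0, 0, 0, 0, 0, 0, 0, 0, 0]

def a3 : Fin 9 → ℤ := ![0, 0, 0, 0, 0, 0, 0, 1, 2]

def s3 : Fin 9 → ℤ := ![0, 0, 0, 0, 0, 0, 0, 1, 0]

def gam3 : Fin 9 → ℤ := ![0, 0, 0, 0, 0, 0, 0, 0, -1]

def B5 : Matrix (Fin 9) (Fin 9) ℤ :=
  !![0, 0, 0, 0, 0, 0, 0, 0, 0;
     1, 0, 0, 0, 0, 0, 0, 0, 0;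
     2, 1, 0, 0, 0, 0, 0, 0, 0;
     3, 2, 1, 0, 0, 0, 0, 0, 0;
     0, 0, 0, 0, 3, 2, 1, 0, 0;
     0, 0, 0, 0, 2, 4, 2, 0, 0;
     0, 0, 0, 0, 1, 2, 3, 0, 0;
     0, 0, 0, 0, 0, 0, 0, 1, 3;
     0, 0, 0, 0, 0, 0, 0, 3, 1]

def E5 : Matrix (Fin 9) (Fin 9) ℤ :=
  !![0, 0, 0, 0, 0, 0, 0, 0, 0;
     0, 0, 0, 0, 0, 0, 0, 0, 0;
     0, 0, 0, 0, 0, 0, 0, 0, 0;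
     0, 0, 0, 0, 0, 0, 0, 0, 0;
     0, 0, 0, 0, -1, 0, 0, 0, 0;
     0, 0, 0, 0, 0, -1, 0, 0, 0;
     0, 0, 0, 0, 0, 0, -1, 0, 0;
     0, 0, 0, 0, 0, 0, 0, 0, -1;
     0, 0, 0, 0, 0, 0, 0, -1, 0]

def a5 : Fin 9 → ℤ := ![1, 2, 3, 4, 0, 0, 0, 0, 0]

def s5 : Fin 9 → ℤ := ![1, 0, 0, 0, 0, 0, 0, 0, 0]

def gam5 : Fin 9 → ℤ := ![0, 0, 0, -1, 0, 0, 0, 0, 0]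

def SG : Matrix (Fin 10) (Fin 10) ℤ :=
  !![0, 1, 0, 0, 0, 0, 0, 0, 0, 0;
     0, 0, 0, 0, 0, 0, 0, 0, 0, 0;
     0, 0, -1, 1, 0, 0, 0, 0, 0, 0;
     0, 0, 0, -1, 1, 0, 0, 0, 0, 0;
     0, 0, 0, 0, -1, 1, 0, 0, 0, 1;
     0, 0, 0, 0, 0, -1, 1, 0, 0, 0;
     0, 0, 0, 0, 0, 0, -1, 1, 0, 0;
     0, 0, 0, 0, 0, 0, 0, -1, 1, 0;
     0, 0, 0, 0, 0, 0, 0, 0, -1, 0;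
     0, 0, 0, 0, 0, 0, 0, 0, 0, -1]

def SA : Matrix (Fin 9) (Fin 9) ℤ :=
  !![-1, 1, 0, 0, 0, 0, 0, 0, 0;
     0, -1, 1, 0, 0, 0, 0, 0, 0;
     0, 0, -1, 1, 0, 0, 0, 0, 0;
     0, 0, 0, -1, 0, 0, 0, 0, 0;
     0, 0, 0, 0, -1, 1, 0, 0, 0;
     0, 0, 0, 0, 0, -1, 1, 0, 0;
     0, 0, 0, 0, 0, 0, -1, 0, 0;
     0, 0, 0, 0, 0, 0, 0, -1, 1;
     0, 0, 0, 0, 0, 0, 0, 0, -1]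
-- ## Certified facts about the explicit data

lemma hGG' : ambientGram * Ginv = 1 := by decide
lemma hG'G : Ginv * ambientGram = 1 := by decide
lemma hGsym : ambientGramᵀ = ambientGram := by decide
lemma hAsym : rootGramᵀ = rootGram := by decide
lemma hSG : ambientGram = SG + SGᵀ := by decide
lemma hSA : rootGram = SA + SAᵀ := by decide
lemma hAC : rootGram * Cmat = (60 : ℤ) • (1 : Matrix (Fin 9) (Fin 9) ℤ) := by decide
lemma hCsplit : Cmat = vecMulVec a0 wv + (60 : ℤ) • Emat := by decide
lemma hwA : wv ᵥ* rootGram = (60 : ℤ) • g0 := by decide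
lemma hAa0 : rootGram *ᵥ a0 = (60 : ℤ) • gam0 := by decide
lemma hc0 : a0 ⬝ᵥ (rootGram *ᵥ a0) = -9420 := by decide
lemma hB2 : B2 * rootGram = 1 - vecMulVec a2 s2 + (2 : ℤ) • E2 := by decide
lemma hB3 : B3 * rootGram = 1 - vecMulVec a3 s3 + (3 : ℤ) • E3 := by decide
lemma hB5 : B5 * rootGram = 1 - vecMulVec a5 s5 + (5 : ℤ) • E5 := by decide
lemma hAa2 : rootGram *ᵥ a2 = (2 : ℤ) • gam2 := by decide
lemma hAa3 : rootGram *ᵥ a3 = (3 : ℤ) • gam3 := by decide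
lemma hAa5 : rootGram *ᵥ a5 = (5 : ℤ) • gam5 := by decide
lemma hc2 : a2 ⬝ᵥ (rootGram *ᵥ a2) = -4 := by decide
lemma hc3 : a3 ⬝ᵥ (rootGram *ᵥ a3) = -6 := by decide
lemma hc5 : a5 ⬝ᵥ (rootGram *ᵥ a5) = -20 := by decide

-- ## Generic helpers

lemma vecMulVec_mulVec' (a b : Fin 9 → ℤ) (q : Fin 9 → ℤ) :
    (vecMulVec a b) *ᵥ q = (b ⬝ᵥ q) • a := by
  ext i
  simp [vecMulVec_apply, mulVec, dotProduct, Finset.mul_sum, Finset.sum_mul,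
    mul_comm, mul_left_comm]

lemma symPair {n : ℕ} (P : Matrix (Fin n) (Fin n) ℤ) (hP : Pᵀ = P)
    (x y : Fin n → ℤ) : x ⬝ᵥ (P *ᵥ y) = y ⬝ᵥ (P *ᵥ x) := by
  conv_lhs => rw [← hP]
  rw [mulVec_transpose, dotProduct_comm, ← dotProduct_mulVec]


lemma evenQuad {n : ℕ} (P S : Matrix (Fin n) (Fin n) ℤ) (hS : P = S + Sᵀ)
    (x : Fin n → ℤ) : ∃ k, x ⬝ᵥ (P *ᵥ x) = 2 * k := by
  refine ⟨x ⬝ᵥ (S *ᵥ x), ?_⟩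
  have h2 : x ⬝ᵥ (Sᵀ *ᵥ x) = x ⬝ᵥ (S *ᵥ x) := by
    rw [mulVec_transpose, dotProduct_comm, ← dotProduct_mulVec]
  rw [hS, add_mulVec, dotProduct_add, h2]; ring

lemma evenG (x : Fin 10 → ℤ) : ∃ k, x ⬝ᵥ (ambientGram *ᵥ x) = 2 * k :=
  evenQuad _ SG hSG x

lemma evenA (x : Fin 9 → ℤ) : ∃ k, x ⬝ᵥ (rootGram *ᵥ x) = 2 * k :=
  evenQuad _ SA hSA x

section SL

variable (M : Matrix (Fin 10) (Fin 9) ℤ)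

/-- duality: pairing of `M *ᵥ β` against `G *ᵥ x` computes through `N = Mᵀ * G`. -/
lemma Mdual (β : Fin 9 → ℤ) (x : Fin 10 → ℤ) :
    (M *ᵥ β) ⬝ᵥ (ambientGram *ᵥ x) = β ⬝ᵥ ((Mᵀ * ambientGram) *ᵥ x) := by
  rw [dotProduct_mulVec, ← vecMul_transpose, vecMul_vecMul, ← dotProduct_mulVec]

/-- The saturation lemma, parameterized by prime data. -/
lemma SL (hM : Mᵀ * ambientGram * M = rootGram) (p : ℤ) (B Ep : Matrix (Fin 9) (Fin 9) ℤ) (ap sp gp : Fin 9 → ℤ)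
    (h1 : B * rootGram = 1 - vecMulVec ap sp + p • Ep)
    (h2 : rootGram *ᵥ ap = p • gp)
    (hc : ∀ t : ℤ, (∃ k, t * t * (ap ⬝ᵥ (rootGram *ᵥ ap)) = 2 * p ^ 2 * k) → p ∣ t)
    (u : Fin 9 → ℤ) (y : Fin 10 → ℤ) (h : M *ᵥ u = p • y) :
    ∃ u', u = p • u' := by
  have hNM : (Mᵀ * ambientGram) * M = rootGram := hM
  -- A *ᵥ u = p • (N *ᵥ y)
  have hAu : rootGram *ᵥ u = p • ((Mᵀ * ambientGram) *ᵥ y) := by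
    rw [← hNM, ← mulVec_mulVec, h, mulVec_smul]
  set t : ℤ := sp ⬝ᵥ u with ht
  set δ : Fin 9 → ℤ := B *ᵥ ((Mᵀ * ambientGram) *ᵥ y) - Ep *ᵥ u with hδ
  have key : u = t • ap + p • δ := by
    have e1 : (B * rootGram) *ᵥ u = p • (B *ᵥ ((Mᵀ * ambientGram) *ᵥ y)) := by
      rw [← mulVec_mulVec, hAu, mulVec_smul]
    rw [h1] at e1
    have e2 : (1 - vecMulVec ap sp + p • Ep) *ᵥ u
        = u - t • ap + p • (Ep *ᵥ u) := by
      rw [add_mulVec, sub_mulVec, smul_mulVec, one_mulVec, vecMulVec_mulVec']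
    rw [e2] at e1
    have : u = p • (B *ᵥ ((Mᵀ * ambientGram) *ᵥ y)) + t • ap - p • (Ep *ᵥ u) := by
      rw [← e1]; abel
    rw [this, hδ, smul_sub]; abel
  -- quadratic value two ways
  have quad : u ⬝ᵥ (rootGram *ᵥ u)
      = t * t * (ap ⬝ᵥ (rootGram *ᵥ ap)) + 2 * p ^ 2 * (t * (δ ⬝ᵥ gp))
        + p ^ 2 * (δ ⬝ᵥ (rootGram *ᵥ δ)) := by
    have hsym : ap ⬝ᵥ (rootGram *ᵥ δ) = δ ⬝ᵥ (rootGram *ᵥ ap) := symPair _ hAsym _ _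
    have hga : δ ⬝ᵥ (rootGram *ᵥ ap) = p * (δ ⬝ᵥ gp) := by
      rw [h2, dotProduct_smul, smul_eq_mul]
    calc u ⬝ᵥ (rootGram *ᵥ u)
        = (t • ap + p • δ) ⬝ᵥ (rootGram *ᵥ (t • ap + p • δ)) := by rw [← key]
      _ = t * (t * (ap ⬝ᵥ (rootGram *ᵥ ap)) + p * (ap ⬝ᵥ (rootGram *ᵥ δ)))
          + p * (t * (δ ⬝ᵥ (rootGram *ᵥ ap)) + p * (δ ⬝ᵥ (rootGram *ᵥ δ))) := by
          rw [mulVec_add, mulVec_smul, mulVec_smul, add_dotProduct, smul_dotProduct,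
            smul_dotProduct, dotProduct_add, dotProduct_add, dotProduct_smul,
            dotProduct_smul, dotProduct_smul, dotProduct_smul]
          simp only [smul_eq_mul]; try ring
      _ = _ := by rw [hsym, hga]; ring
  have other : u ⬝ᵥ (rootGram *ᵥ u) = p ^ 2 * (y ⬝ᵥ (ambientGram *ᵥ y)) := by
    have : u ⬝ᵥ (rootGram *ᵥ u) = (M *ᵥ u) ⬝ᵥ (ambientGram *ᵥ (M *ᵥ u)) := by
      rw [Mdual M, mulVec_mulVec, hNM]
    rw [this, h, mulVec_smul, dotProduct_smul, smul_dotProduct]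
    simp only [smul_eq_mul]; try ring
  obtain ⟨n, hn⟩ := evenG y
  obtain ⟨m, hm⟩ := evenA δ
  have hpt : p ∣ t := by
    refine hc t ⟨n - t * (δ ⬝ᵥ gp) - m, ?_⟩
    have := quad.symm.trans other
    rw [hn] at this; rw [hm] at quad
    nlinarith [quad, this]
  obtain ⟨t', ht'⟩ := hpt
  exact ⟨t' • ap + δ, by rw [key, ht', smul_add, smul_smul, mul_comm p t']⟩

end SL

section SLinst

variable (M : Matrix (Fin 10) (Fin 9) ℤ)

lemma SL2 (hM : Mᵀ * ambientGram * M = rootGram) (u : Fin 9 → ℤ) (y : Fin 10 → ℤ) (h : M *ᵥ u = (2:ℤ) • y) :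
    ∃ u', u = (2:ℤ) • u' := by
  refine SL M hM 2 B2 E2 a2 s2 gam2 hB2 hAa2 ?_ u y h
  intro t ⟨k, hk⟩
  rw [hc2] at hk
  have h2 : (2:ℤ) ∣ t * t := ⟨-k, by linarith⟩
  exact ((Int.prime_two).2.2 t t h2).elim id id

lemma SL3 (hM : Mᵀ * ambientGram * M = rootGram) (u : Fin 9 → ℤ) (y : Fin 10 → ℤ) (h : M *ᵥ u = (3:ℤ) • y) :
    ∃ u', u = (3:ℤ) • u' := by
  refine SL M hM 3 B3 E3 a3 s3 gam3 hB3 hAa3 ?_ u y h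
  intro t ⟨k, hk⟩
  rw [hc3] at hk
  have h3 : (3:ℤ) ∣ t * t := ⟨-k, by linarith⟩
  exact ((Int.prime_three).2.2 t t h3).elim id id

lemma SL5 (hM : Mᵀ * ambientGram * M = rootGram) (u : Fin 9 → ℤ) (y : Fin 10 → ℤ) (h : M *ᵥ u = (5:ℤ) • y) :
    ∃ u', u = (5:ℤ) • u' := by
  refine SL M hM 5 B5 E5 a5 s5 gam5 hB5 hAa5 ?_ u y h
  intro t ⟨k, hk⟩
  rw [hc5] at hk
  have h5' : (5:ℤ) ∣ 2 * (t * t) := ⟨-k, by linarith⟩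
  obtain ⟨s, hs⟩ : ∃ s, s = t * t := ⟨_, rfl⟩
  rw [← hs] at h5'
  have h5 : (5:ℤ) ∣ t * t := by rw [← hs]; omega
  have hp5 : Prime (5:ℤ) := by norm_num
  exact (hp5.2.2 t t h5).elim id id

lemma smul_cancel {n : ℕ} {c : ℤ} (hc : c ≠ 0) {x y : Fin n → ℤ}
    (h : c • x = c • y) : x = y := by
  funext i
  have := congrFun h i
  simp only [Pi.smul_apply, smul_eq_mul] at this
  exact mul_left_cancel₀ hc this

lemma SL60 (hM : Mᵀ * ambientGram * M = rootGram) (u : Fin 9 → ℤ) (y : Fin 10 → ℤ) (h : M *ᵥ u = (60:ℤ) • y) :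
    ∃ β, u = (60:ℤ) • β ∧ M *ᵥ β = y := by
  obtain ⟨u1, hu1⟩ := SL2 M hM u ((30:ℤ) • y) (by rw [h, smul_smul]; norm_num)
  have h1 : M *ᵥ u1 = (30:ℤ) • y := by
    apply smul_cancel (c := (2:ℤ)) two_ne_zero
    rw [← mulVec_smul, ← hu1, h, smul_smul]; norm_num
  obtain ⟨u2, hu2⟩ := SL2 M hM u1 ((15:ℤ) • y) (by rw [h1, smul_smul]; norm_num)
  have h2 : M *ᵥ u2 = (15:ℤ) • y := by
    apply smul_cancel (c := (2:ℤ)) two_ne_zero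
    rw [← mulVec_smul, ← hu2, h1, smul_smul]; norm_num
  obtain ⟨u3, hu3⟩ := SL3 M hM u2 ((5:ℤ) • y) (by rw [h2, smul_smul]; norm_num)
  have h3 : M *ᵥ u3 = (5:ℤ) • y := by
    apply smul_cancel (c := (3:ℤ)) three_ne_zero
    rw [← mulVec_smul, ← hu3, h2, smul_smul]; norm_num
  obtain ⟨β, hβ⟩ := SL5 M hM u3 y (by rw [h3])
  have h4 : M *ᵥ β = y := by
    apply smul_cancel (c := (5:ℤ)) (by norm_num)
    rw [← mulVec_smul, ← hβ, h3]
  refine ⟨β, ?_, h4⟩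
  rw [hu1, hu2, hu3, hβ, smul_smul, smul_smul, smul_smul]; norm_num

end SLinst

section Kernel

lemma castv_mulVec {m n : ℕ} (P : Matrix (Fin m) (Fin n) ℤ) (x : Fin n → ℤ) :
    (fun i => ((P *ᵥ x) i : ℚ)) = (P.map (Int.cast : ℤ → ℚ)) *ᵥ (fun j => (x j : ℚ)) := by
  funext i
  simp only [mulVec, dotProduct, Matrix.map_apply]
  push_cast
  rfl

lemma castv_dot {n : ℕ} (a b : Fin n → ℤ) :
    (fun i => ((a i : ℚ))) ⬝ᵥ (fun i => ((b i : ℚ))) = ((a ⬝ᵥ b : ℤ) : ℚ) := by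
  simp only [dotProduct]
  push_cast
  rfl

lemma map_mul_int {l m n : ℕ} (X : Matrix (Fin l) (Fin m) ℤ) (Y : Matrix (Fin m) (Fin n) ℤ) :
    (X * Y).map (Int.cast : ℤ → ℚ) = X.map Int.cast * Y.map Int.cast :=
  Matrix.map_mul (f := Int.castRingHom ℚ)

lemma exists_kernel_vector (M : Matrix (Fin 10) (Fin 9) ℤ)
    (hM : Mᵀ * ambientGram * M = rootGram) :
    ∃ (v x₀ : Fin 10 → ℤ),
      (Mᵀ * ambientGram) *ᵥ v = 0 ∧
      (ambientGram *ᵥ v) ⬝ᵥ x₀ = 1 ∧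
      ∀ z : Fin 10 → ℤ, (Mᵀ * ambientGram) *ᵥ z = 0 → ∃ k : ℤ, z = k • v := by
  have hNM : (Mᵀ * ambientGram) * M = rootGram := hM
  set Nq : Matrix (Fin 9) (Fin 10) ℚ := (Mᵀ * ambientGram).map (Int.cast : ℤ → ℚ) with hNq
  set f : (Fin 10 → ℚ) →ₗ[ℚ] (Fin 9 → ℚ) := Nq.mulVecLin with hf
  -- surjectivity of f over ℚ
  have hNMQ : Nq * M.map (Int.cast : ℤ → ℚ) = rootGram.map (Int.cast : ℤ → ℚ) := by
    rw [hNq, ← hNM]; exact (map_mul_int _ _).symm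
  have hACQ : (rootGram.map (Int.cast : ℤ → ℚ)) * (Cmat.map (Int.cast : ℤ → ℚ))
      = (60 : ℚ) • (1 : Matrix (Fin 9) (Fin 9) ℚ) := by
    rw [show rootGram.map (Int.cast : ℤ → ℚ) * Cmat.map (Int.cast : ℤ → ℚ) = (rootGram * Cmat).map (Int.cast : ℤ → ℚ) from (map_mul_int _ _).symm, hAC]
    ext i j
    simp only [Matrix.map_apply, Matrix.smul_apply, Matrix.one_apply, smul_eq_mul]
    split <;> simp
  have hsurj : Function.Surjective f := by
    intro b
    refine ⟨(M.map (Int.cast : ℤ → ℚ)) *ᵥ ((Cmat.map (Int.cast : ℤ → ℚ)) *ᵥ ((60 : ℚ)⁻¹ • b)), ?_⟩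
    rw [hf, mulVecLin_apply, mulVec_mulVec, mulVec_mulVec, hNMQ, hACQ]
    rw [mulVec_smul, smul_mulVec, one_mulVec, smul_smul]
    norm_num
  -- kernel is 1-dimensional
  have hrank : Module.finrank ℚ (LinearMap.ker f) = 1 := by
    have h1 := LinearMap.finrank_range_add_finrank_ker f
    rw [LinearMap.range_eq_top.mpr hsurj, finrank_top, Module.finrank_fin_fun,
      Module.finrank_fin_fun] at h1
    omega
  -- a nonzero rational kernel vector
  have hker : LinearMap.ker f ≠ ⊥ := by
    intro hbot
    rw [hbot] at hrank
    simp [finrank_bot] at hrank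
  obtain ⟨zq, hzq, hzq0⟩ := (Submodule.ne_bot_iff _).mp hker
  -- clear denominators
  obtain ⟨b, hb⟩ := IsLocalization.exist_integer_multiples_of_finite
    (nonZeroDivisors ℤ) zq
  choose zz hzz using hb
  have hbne : (b : ℤ) ≠ 0 := nonZeroDivisors.coe_ne_zero b
  have hzzq : ∀ i, ((zz i : ℚ)) = (b : ℤ) • zq i := fun i => hzz i
  have hzz0 : zz ≠ 0 := by
    intro h0
    apply hzq0
    funext i
    have h := (hzzq i).symm
    rw [h0] at h
    simp only [Pi.zero_apply, Int.cast_zero, zsmul_eq_mul] at h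
    rcases mul_eq_zero.mp h with h' | h'
    · exact absurd (Int.cast_eq_zero.mp h') hbne
    · exact h'
  -- zz is an integer kernel vector
  have hNzz : (Mᵀ * ambientGram) *ᵥ zz = 0 := by
    have hzzv : (fun j => ((zz j : ℚ))) = (b : ℤ) • zq := by
      funext j; rw [hzzq j]; rfl
    have hker0 : ((Mᵀ * ambientGram).map (Int.cast : ℤ → ℚ)) *ᵥ zq = 0 := by
      have h := LinearMap.mem_ker.mp hzq
      rwa [hf, mulVecLin_apply, hNq] at h
    have hcast : (fun i => (((Mᵀ * ambientGram) *ᵥ zz) i : ℚ)) = 0 := by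
      rw [castv_mulVec, hzzv, mulVec_smul, hker0, smul_zero]
    funext i
    have h := congrFun hcast i
    simp only [Pi.zero_apply] at h
    exact_mod_cast h
  -- build a primitive kernel vector
  set u : Fin 10 → ℤ := ambientGram *ᵥ zz with hu
  have hu0 : u ≠ 0 := by
    intro h0
    apply hzz0
    have h : zz = (Ginv * ambientGram) *ᵥ zz := by rw [hG'G, one_mulVec]
    rw [h, ← mulVec_mulVec, ← hu, h0, mulVec_zero]
  set I : Ideal ℤ := Ideal.span (Set.range u) with hI
  have hgmem : Submodule.IsPrincipal.generator I ∈ I :=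
    Submodule.IsPrincipal.generator_mem I
  set g : ℤ := Submodule.IsPrincipal.generator I with hg
  obtain ⟨cf, hcf⟩ : ∃ cfun : Fin 10 → ℤ, ∑ i, cfun i * u i = g :=
    Ideal.mem_span_range_iff_exists_fun.mp hgmem
  have hdvd : ∀ i, g ∣ u i := by
    intro i
    have hui : u i ∈ I := Ideal.subset_span ⟨i, rfl⟩
    rw [← Ideal.span_singleton_generator I] at hui
    exact Ideal.mem_span_singleton.mp hui
  have hg0 : g ≠ 0 := by
    intro h0
    apply hu0
    funext i
    have h := hdvd i
    rw [h0] at h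
    exact zero_dvd_iff.mp h
  set u' : Fin 10 → ℤ := fun i => u i / g with hu'
  have hgu' : g • u' = u := by
    funext i
    simp only [Pi.smul_apply, smul_eq_mul, hu']
    exact Int.mul_ediv_cancel' (hdvd i)
  set v : Fin 10 → ℤ := Ginv *ᵥ u' with hv
  have huv : ambientGram *ᵥ v = u' := by
    rw [hv, mulVec_mulVec, hGG', one_mulVec]
  have hgv : g • v = zz := by
    rw [hv, ← mulVec_smul, hgu', hu, mulVec_mulVec, hG'G, one_mulVec]
  have hpair : (ambientGram *ᵥ v) ⬝ᵥ cf = 1 := by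
    have key : g * ((ambientGram *ᵥ v) ⬝ᵥ cf) = g * 1 := by
      rw [huv, mul_one]
      calc g * (u' ⬝ᵥ cf) = (g • u') ⬝ᵥ cf := by rw [smul_dotProduct]; rfl
        _ = u ⬝ᵥ cf := by rw [hgu']
        _ = g := by rw [dotProduct_comm]; exact hcf
    exact mul_left_cancel₀ hg0 key
  have hNv : (Mᵀ * ambientGram) *ᵥ v = 0 := by
    have h : g • ((Mᵀ * ambientGram) *ᵥ v) = 0 := by
      rw [← mulVec_smul, hgv, hNzz]
    rcases smul_eq_zero.mp h with h' | h'
    · exact absurd h' hg0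
    · exact h'
  refine ⟨v, cf, hNv, hpair, ?_⟩
  -- spanning property
  have hv0 : v ≠ 0 := by
    intro h0
    rw [h0, mulVec_zero, zero_dotProduct] at hpair
    exact absurd hpair (by norm_num)
  set vq : Fin 10 → ℚ := fun i => ((v i : ℚ)) with hvq
  have hvq0 : vq ≠ 0 := by
    intro h0
    apply hv0
    funext i
    have h := congrFun h0 i
    rw [hvq] at h
    simp only [Pi.zero_apply] at h
    exact_mod_cast h
  have hvker : vq ∈ LinearMap.ker f := by
    rw [LinearMap.mem_ker, hf, mulVecLin_apply, hNq, hvq, ← castv_mulVec, hNv]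
    funext i; simp
  have hspan : LinearMap.ker f = Submodule.span ℚ {vq} := by
    refine (Submodule.eq_of_le_of_finrank_eq
      (Submodule.span_le.mpr (by simpa using hvker)) ?_).symm
    rw [hrank, finrank_span_singleton hvq0]
  intro z hz
  have hzker : (fun i => ((z i : ℚ))) ∈ LinearMap.ker f := by
    rw [LinearMap.mem_ker, hf, mulVecLin_apply, hNq, ← castv_mulVec, hz]
    funext i; simp
  rw [hspan] at hzker
  obtain ⟨q, hqv⟩ := Submodule.mem_span_singleton.mp hzker
  set k : ℤ := (ambientGram *ᵥ z) ⬝ᵥ cf with hk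
  have hqk : q = (k : ℚ) := by
    have e1 : ((ambientGram.map (Int.cast : ℤ → ℚ)) *ᵥ (q • vq)) ⬝ᵥ (fun i => ((cf i : ℚ)))
        = q := by
      rw [mulVec_smul, smul_dotProduct]
      have h1 : ((ambientGram.map (Int.cast : ℤ → ℚ)) *ᵥ vq) ⬝ᵥ (fun i => ((cf i : ℚ))) = 1 := by
        rw [hvq, ← castv_mulVec, castv_dot, hpair]
        norm_num
      rw [h1, smul_eq_mul, mul_one]
    have e2 : ((ambientGram.map (Int.cast : ℤ → ℚ)) *ᵥ (fun i => ((z i : ℚ))))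
        ⬝ᵥ (fun i => ((cf i : ℚ))) = (k : ℚ) := by
      rw [← castv_mulVec, castv_dot, hk]
    rw [← e1, hqv, e2]
  refine ⟨k, ?_⟩
  funext i
  have h1 := congrFun hqv i
  simp only [Pi.smul_apply, smul_eq_mul, hvq, hqk] at h1
  have h3 : k * v i = z i := by exact_mod_cast h1
  rw [Pi.smul_apply, smul_eq_mul]
  exact h3.symm

end Kernel

section Main

/-- Quadratic form of a decomposed vector. -/
lemma quadDecomp (M : Matrix (Fin 10) (Fin 9) ℤ)
    (hM : Mᵀ * ambientGram * M = rootGram)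
    (v : Fin 10 → ℤ) (hNv : (Mᵀ * ambientGram) *ᵥ v = 0)
    (a : Fin 9 → ℤ) (ρ : ℤ) :
    (M *ᵥ a + ρ • v) ⬝ᵥ (ambientGram *ᵥ (M *ᵥ a + ρ • v))
      = a ⬝ᵥ (rootGram *ᵥ a) + ρ * ρ * ((ambientGram *ᵥ v) ⬝ᵥ v) := by
  have hNM : (Mᵀ * ambientGram) * M = rootGram := hM
  have hMGv : ∀ b : Fin 9 → ℤ, (M *ᵥ b) ⬝ᵥ (ambientGram *ᵥ v) = 0 := by
    intro b
    rw [Mdual M, hNv, dotProduct_zero]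
  have hT11 : (M *ᵥ a) ⬝ᵥ (ambientGram *ᵥ (M *ᵥ a)) = a ⬝ᵥ (rootGram *ᵥ a) := by
    rw [Mdual M, mulVec_mulVec, hNM]
  have hT21 : v ⬝ᵥ (ambientGram *ᵥ (M *ᵥ a)) = 0 := by
    rw [symPair _ hGsym, hMGv]
  have hT22 : v ⬝ᵥ (ambientGram *ᵥ v) = (ambientGram *ᵥ v) ⬝ᵥ v := dotProduct_comm _ _
  rw [mulVec_add, mulVec_smul, add_dotProduct, smul_dotProduct, dotProduct_add,
    dotProduct_add, dotProduct_smul, dotProduct_smul, hT11, hT21, hMGv a, hT22]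
  simp only [smul_eq_mul]
  ring

/-- Expansion of the quadratic form on the root side. -/
lemma alphaExpand (τ : ℤ) (δ : Fin 9 → ℤ) :
    (τ • a0 + (60:ℤ) • δ) ⬝ᵥ (rootGram *ᵥ (τ • a0 + (60:ℤ) • δ))
      = τ * τ * (-9420) + 7200 * (τ * (δ ⬝ᵥ gam0)) + 3600 * (δ ⬝ᵥ (rootGram *ᵥ δ)) := by
  have hsym : a0 ⬝ᵥ (rootGram *ᵥ δ) = δ ⬝ᵥ (rootGram *ᵥ a0) := symPair _ hAsym _ _
  have hga : δ ⬝ᵥ (rootGram *ᵥ a0) = 60 * (δ ⬝ᵥ gam0) := by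
    rw [hAa0, dotProduct_smul, smul_eq_mul]
  rw [mulVec_add, mulVec_smul, mulVec_smul, add_dotProduct, smul_dotProduct,
    smul_dotProduct, dotProduct_add, dotProduct_add, dotProduct_smul, dotProduct_smul,
    dotProduct_smul, dotProduct_smul, hsym, hga, hc0]
  simp only [smul_eq_mul]
  ring

theorem stmt_2' :
    ¬ ∃ M : Matrix (Fin 10) (Fin 9) ℤ,
      Mᵀ * ambientGram * M = rootGram := by
  rintro ⟨M, hM⟩
  have hNM : (Mᵀ * ambientGram) * M = rootGram := hM
  obtain ⟨v, x₀, hNv, hvx₀, hspan⟩ := exists_kernel_vector M hM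
  -- the "glue coordinate" functional
  set T : (Fin 10 → ℤ) → ℤ := fun x => wv ⬝ᵥ ((Mᵀ * ambientGram) *ᵥ x) with hT
  set d : ℤ := (ambientGram *ᵥ v) ⬝ᵥ v with hd
  -- residues: for every x, the residual part is in the kernel
  have hNr : ∀ x : Fin 10 → ℤ,
      (Mᵀ * ambientGram) *ᵥ ((60:ℤ) • x - M *ᵥ (Cmat *ᵥ ((Mᵀ * ambientGram) *ᵥ x))) = 0 := by
    intro x
    have h1 : ∀ q : Fin 9 → ℤ, (Mᵀ * ambientGram) *ᵥ (M *ᵥ (Cmat *ᵥ q)) = (60:ℤ) • q := by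
      intro q
      rw [mulVec_mulVec (Cmat *ᵥ q) (Mᵀ * ambientGram) M, hNM,
        mulVec_mulVec q rootGram Cmat, hAC, smul_mulVec, one_mulVec]
    rw [mulVec_sub, mulVec_smul, h1, sub_self]
  -- pairing a residual decomposition with G v
  have hρrel : ∀ (x : Fin 10 → ℤ) (ρx : ℤ),
      (60:ℤ) • x - M *ᵥ (Cmat *ᵥ ((Mᵀ * ambientGram) *ᵥ x)) = ρx • v →
      ρx * d = 60 * ((ambientGram *ᵥ v) ⬝ᵥ x) := by
    intro x ρx hx
    have h1 := congrArg (fun y => (ambientGram *ᵥ v) ⬝ᵥ y) hx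
    simp only [dotProduct_sub, dotProduct_smul, smul_eq_mul] at h1
    have h2 : (ambientGram *ᵥ v) ⬝ᵥ (M *ᵥ (Cmat *ᵥ ((Mᵀ * ambientGram) *ᵥ x))) = 0 := by
      rw [dotProduct_comm, Mdual M, hNv, dotProduct_zero]
    rw [h2, sub_zero] at h1
    rw [hd]
    linarith [h1]
  -- ρ₀ : component of x₀ along v
  obtain ⟨ρ₀, hρ₀⟩ := hspan _ (hNr x₀)
  have hρ₀d : ρ₀ * d = 60 := by
    have := hρrel x₀ ρ₀ hρ₀
    rwa [hvx₀, mul_one] at this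
  have hd0 : d ≠ 0 := by
    intro h0
    rw [h0, mul_zero] at hρ₀d
    norm_num at hρ₀d
  -- T on basis vectors, and surjectivity mod 2 and 3
  have hTe : ∀ j, T (Pi.single j 1) = (wv ᵥ* (Mᵀ * ambientGram)) j := by
    intro j
    rw [hT]
    simp only []
    rw [dotProduct_mulVec, dotProduct_single, mul_one]
  have hrowid : wv ᵥ* (Mᵀ * ambientGram) = (M *ᵥ wv) ᵥ* ambientGram := by
    rw [← vecMul_vecMul, vecMul_transpose]
  have hclaim : ∀ p : ℤ, (p = 2 ∨ p = 3) →
      (∀ u' : Fin 9 → ℤ, wv ≠ p • u') →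
      (∀ (u : Fin 9 → ℤ) (y : Fin 10 → ℤ), M *ᵥ u = p • y → ∃ u', u = p • u') →
      ∃ j, ¬ p ∣ T (Pi.single j 1) := by
    intro p _ hwnot hSLp
    by_contra hcon
    push_neg at hcon
    have hdiv : ∀ j, p ∣ (wv ᵥ* (Mᵀ * ambientGram)) j := by
      intro j; rw [← hTe]; exact hcon j
    set y : Fin 10 → ℤ := fun j => (wv ᵥ* (Mᵀ * ambientGram)) j / p with hy
    have hrow : wv ᵥ* (Mᵀ * ambientGram) = p • y := by
      funext j
      simp only [hy, Pi.smul_apply, smul_eq_mul]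
      exact (Int.mul_ediv_cancel' (hdiv j)).symm
    have hMw : M *ᵥ wv = p • (y ᵥ* Ginv) := by
      have h1 : M *ᵥ wv = ((M *ᵥ wv) ᵥ* ambientGram) ᵥ* Ginv := by
        rw [vecMul_vecMul, hGG', vecMul_one]
      rw [h1, ← hrowid, hrow, smul_vecMul]
    obtain ⟨u', hu'⟩ := hSLp wv (y ᵥ* Ginv) hMw
    exact hwnot u' hu'
  obtain ⟨j₂, hj₂⟩ := hclaim 2 (Or.inl rfl)
    (by
      intro u' hu'
      have h4 := congrFun hu' 4
      simp only [Pi.smul_apply, smul_eq_mul] at h4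
      have : wv 4 = 15 := by decide
      omega)
    (fun u y h => SL2 M hM u y h)
  obtain ⟨j₃, hj₃⟩ := hclaim 3 (Or.inr rfl)
    (by
      intro u' hu'
      have h7 := congrFun hu' 7
      simp only [Pi.smul_apply, smul_eq_mul] at h7
      have : wv 7 = 20 := by decide
      omega)
    (fun u y h => SL3 M hM u y h)
  -- linearity of T
  have hTlin : ∀ (c : ℤ) (x y : Fin 10 → ℤ), T (x + c • y) = T x + c * T y := by
    intro c x y
    rw [hT]
    simp only []
    rw [mulVec_add, mulVec_smul, dotProduct_add, dotProduct_smul, smul_eq_mul]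
  have hTsub : ∀ (c : ℤ) (x y : Fin 10 → ℤ), T (x - c • y) = T x - c * T y := by
    intro c x y
    have := hTlin (-c) x y
    rw [neg_smul, ← sub_eq_add_neg] at this
    rw [this]; ring
  -- a vector with T-value prime to 6
  set xstar : Fin 10 → ℤ := Pi.single j₂ 1 + (4:ℤ) • Pi.single j₃ 1 + (2:ℤ) • Pi.single j₂ 1
    with hxstar
  have hTstar : T xstar = 3 * T (Pi.single j₂ 1) + 4 * T (Pi.single j₃ 1) := by
    rw [hxstar, hTlin, hTlin]
    ring
  have hts2 : ¬ (2:ℤ) ∣ T xstar := by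
    rw [hTstar]; omega
  have hts3 : ¬ (3:ℤ) ∣ T xstar := by
    rw [hTstar]; omega
  -- the z-vector: kill the v-component
  set sstar : ℤ := (ambientGram *ᵥ v) ⬝ᵥ xstar with hss
  set z : Fin 10 → ℤ := xstar - sstar • x₀ with hz
  obtain ⟨ρz, hρz⟩ := hspan _ (hNr z)
  have hρz0 : ρz = 0 := by
    have h1 := hρrel z ρz hρz
    have h2 : (ambientGram *ᵥ v) ⬝ᵥ z = 0 := by
      rw [hz, dotProduct_sub, dotProduct_smul, smul_eq_mul, hvx₀, mul_one, hss, sub_self]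
    rw [h2, mul_zero] at h1
    rcases mul_eq_zero.mp h1 with h | h
    · exact h
    · exact absurd h hd0
  have hMz : M *ᵥ (Cmat *ᵥ ((Mᵀ * ambientGram) *ᵥ z)) = (60:ℤ) • z := by
    have := hρz
    rw [hρz0, zero_smul, sub_eq_zero] at this
    exact this.symm
  obtain ⟨β, hβ60, hβ⟩ := SL60 M hM _ z hMz
  have hTz : T z = 60 * (g0 ⬝ᵥ β) := by
    rw [hT]
    simp only []
    rw [← hβ, mulVec_mulVec, hNM, dotProduct_mulVec, hwA, smul_dotProduct, smul_eq_mul]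
  -- τ is prime to 6
  set τ : ℤ := T x₀ with hτ
  have hrel : T xstar - sstar * τ = 60 * (g0 ⬝ᵥ β) := by
    rw [← hTz, hz, hTsub]
  have hτ2 : ¬ (2:ℤ) ∣ τ := by
    rintro ⟨c, hc⟩
    apply hts2
    refine ⟨sstar * c + 30 * (g0 ⬝ᵥ β), ?_⟩
    linear_combination hrel + sstar * hc
  have hτ3 : ¬ (3:ℤ) ∣ τ := by
    rintro ⟨c, hc⟩
    apply hts3
    refine ⟨sstar * c + 20 * (g0 ⬝ᵥ β), ?_⟩
    linear_combination hrel + sstar * hc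
  -- the master congruence at x₀
  set q0 : Fin 9 → ℤ := (Mᵀ * ambientGram) *ᵥ x₀ with hq0
  set δ : Fin 9 → ℤ := Emat *ᵥ q0 with hδ
  set a : Fin 9 → ℤ := Cmat *ᵥ q0 with ha
  have hadec : a = τ • a0 + (60:ℤ) • δ := by
    have hτ' : τ = wv ⬝ᵥ q0 := rfl
    rw [ha, hCsplit, add_mulVec, smul_mulVec, vecMulVec_mulVec', ← hδ, ← hτ']
  have hx0dec : (60:ℤ) • x₀ = M *ᵥ a + ρ₀ • v := by
    rw [← hρ₀, ha, hq0]
    abel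
  obtain ⟨k, hk⟩ := evenG x₀
  obtain ⟨m, hm⟩ := evenA δ
  have hmaster : 3600 * (2 * k)
      = τ * τ * (-9420) + 7200 * (τ * (δ ⬝ᵥ gam0)) + 3600 * (2 * m) + ρ₀ * 60 := by
    have h1 : ((60:ℤ) • x₀) ⬝ᵥ (ambientGram *ᵥ ((60:ℤ) • x₀)) = 3600 * (2 * k) := by
      rw [mulVec_smul, dotProduct_smul, smul_dotProduct, hk]
      simp only [smul_eq_mul]; ring
    have h2 := quadDecomp M hM v hNv a ρ₀
    rw [← hx0dec] at h2
    rw [h1] at h2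
    rw [hadec, alphaExpand, hm] at h2
    have h3 : ρ₀ * ρ₀ * d = ρ₀ * 60 := by
      rw [mul_assoc, hρ₀d]
    rw [← hd, h3] at h2
    linarith
  -- extract ρ₀ ≡ 157 τ² (mod 120)
  have hρform : ρ₀ = 157 * (τ * τ) + 120 * (k - τ * (δ ⬝ᵥ gam0) - m) := by linarith
  -- τ² ≡ 1 (mod 24)
  obtain ⟨a1, ha1⟩ : ∃ a1, τ = 2 * a1 + 1 := ⟨(τ - 1) / 2, by omega⟩
  obtain ⟨b1, hb1⟩ := Int.even_mul_succ_self a1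
  have h8 : (8:ℤ) ∣ τ * τ - 1 :=
    ⟨b1, by linear_combination (τ + 2 * a1 + 1) * ha1 + 4 * hb1⟩
  have h3 : (3:ℤ) ∣ τ * τ - 1 := by
    obtain ⟨b, hb⟩ : ∃ b, τ = 3 * b + 1 ∨ τ = 3 * b + 2 := ⟨τ / 3, by omega⟩
    rcases hb with hb | hb
    · exact ⟨3 * b * b + 2 * b, by linear_combination (τ + 3 * b + 1) * hb⟩
    · exact ⟨3 * b * b + 4 * b + 1, by linear_combination (τ + 3 * b + 2) * hb⟩
  have hmod24 : (24:ℤ) ∣ ρ₀ - 13 := by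
    obtain ⟨s, hs⟩ : ∃ s, s = τ * τ := ⟨_, rfl⟩
    rw [← hs] at hρform h8 h3
    omega
  -- but ρ₀ divides 60, contradiction
  have hle : ρ₀ ≤ 60 := Int.le_of_dvd (by norm_num) ⟨d, hρ₀d.symm⟩
  have hge : -60 ≤ ρ₀ := by
    have h1 : -ρ₀ ∣ 60 := (neg_dvd).mpr ⟨d, hρ₀d.symm⟩
    have := Int.le_of_dvd (by norm_num) h1
    omega
  interval_cases ρ₀ <;> omega

end Main


theorem stmt_2 :
    ¬ ∃ M : Matrix (Fin 10) (Fin 9) ℤ,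
      Mᵀ * ambientGram * M = rootGram := stmt_2'
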